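/- Let ρ be a density matrix on ℂ^d, and let {M_x}_{x∈X} be a finite family of d×d complex matrices with Σ_{x∈X} M_xᴴ M_x = I, where for each x the post-measurement branch is M_x ρ M_xᴴ. Suppose there exists x̂ ∈ X and 0 ≤ ε < 1 with tr(M_{x̂}ᴴ M_{x̂} ρ) ≥ 1 − ε, and suppose the post-measurement branch for outcome x̂ satisfies D(ρ, M_{x̂} ρ M_{x̂}ᴴ / tr(M_{x̂}ᴴ M_{x̂} ρ)) ≤ √ε. Then the total disturbance caused by the measurement (ignoring the outcome) satisfies D( ρ , Σ_{x∈X} M_x ρ M_xᴴ ) ≤ ε + √ε. -/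

import Mathlib

open scoped Matrix Kronecker BigOperators ComplexOrder

noncomputable def traceNorm {n : Type*} [Fintype n] [DecidableEq n]
    (A : Matrix n n ℂ) : ℝ :=
  (((Matrix.posSemidef_conjTranspose_mul_self A).1.eigenvectorUnitary : Matrix n n ℂ) *
    Matrix.diagonal (((↑) : ℝ → ℂ) ∘ ((Matrix.posSemidef_conjTranspose_mul_self A).1.eigenvalues · |>.sqrt)) *
    (star (Matrix.posSemidef_conjTranspose_mul_self A).1.eigenvectorUnitary : Matrix n n ℂ)).trace.re

noncomputable def traceDist {n : Type*} [Fintype n] [DecidableEq n]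
    (ρ σ : Matrix n n ℂ) : ℝ :=
  traceNorm (ρ - σ) / 2

def IsDensityMatrix {n : Type*} [Fintype n] (ρ : Matrix n n ℂ) : Prop :=
  ρ.PosSemidef ∧ ρ.trace = 1

namespace TDAux
open Matrix

variable {n : Type*} [Fintype n] [DecidableEq n]

lemma psd_apply_nonneg {M : Matrix n n ℂ} (hM : M.PosSemidef) (i : n) :
    0 ≤ M i i := by
  exact hM.diag_nonneg

lemma psd_apply_re_nonneg {M : Matrix n n ℂ} (hM : M.PosSemidef) (i : n) :
    0 ≤ (M i i).re :=
  (Complex.le_def.mp (psd_apply_nonneg hM i)).1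

lemma psd_trace_re_nonneg {M : Matrix n n ℂ} (hM : M.PosSemidef) :
    0 ≤ M.trace.re := by
  rw [Matrix.trace, Complex.re_sum]
  exact Finset.sum_nonneg fun i _ => psd_apply_re_nonneg hM i

lemma psd_trace_eq_re {M : Matrix n n ℂ} (hM : M.PosSemidef) :
    M.trace = (M.trace.re : ℂ) := by
  have him : M.trace.im = 0 := by
    rw [Matrix.trace, Complex.im_sum]
    exact Finset.sum_eq_zero fun i _ => by
      have := (Complex.le_def.mp (psd_apply_nonneg hM i)).2
      simpa [Matrix.diag] using this.symm
  exact Complex.ext (by simp) (by simp [him])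

open scoped MatrixOrder in
lemma traceNorm_eq_of_sq {A S : Matrix n n ℂ} (hS : S.PosSemidef) (h : S ^ 2 = Aᴴ * A) :
    traceNorm A = S.trace.re := by
  have hH := posSemidef_conjTranspose_mul_self A
  have e2 : CFC.sqrt (Aᴴ * A) = S := CFC.sqrt_unique (by rw [← h, sq]) hS.nonneg
  rw [CFC.sqrt_eq_cfc, cfc_nnreal_eq_real _ (Aᴴ * A) hH.nonneg, hH.1.cfc_eq] at e2
  rw [traceNorm, ← e2, IsHermitian.cfc, Unitary.conjStarAlgAut_apply]
  congr 5
  funext i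
  simp [Real.coe_sqrt, Real.coe_toNNReal', max_eq_left (hH.eigenvalues_nonneg i)]

lemma traceNorm_psd {M : Matrix n n ℂ} (hM : M.PosSemidef) :
    traceNorm M = M.trace.re := by
  exact traceNorm_eq_of_sq hM (by rw [pow_two, hM.1])

lemma traceNorm_neg (A : Matrix n n ℂ) : traceNorm (-A) = traceNorm A := by
  open scoped MatrixOrder in
  have hS := (CFC.sqrt_nonneg (Aᴴ * A)).posSemidef
  have hsq : CFC.sqrt (Aᴴ * A) ^ 2 = Aᴴ * A := by
    rw [sq]; exact CFC.sqrt_mul_sqrt_self _ (posSemidef_conjTranspose_mul_self A).nonneg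
  rw [traceNorm_eq_of_sq hS hsq, traceNorm_eq_of_sq hS (by rw [hsq]; simp)]


lemma conj_trace {U : Matrix n n ℂ} (M : Matrix n n ℂ) (hU : U ∈ Matrix.unitaryGroup n ℂ) :
    (star U * M * U).trace = M.trace := by
  rw [Matrix.trace_mul_cycle, Matrix.mem_unitaryGroup_iff.mp hU, one_mul]

lemma conj_mul_conj {V D E : Matrix n n ℂ} (hV : star V * V = 1) :
    (V * D * star V) * (V * E * star V) = V * (D * E) * star V := by
  have : (V * D * star V) * (V * E * star V) = V * D * (star V * V) * E * star V := by
    noncomm_ring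
  rw [this, hV, mul_one, mul_assoc V D E]

lemma psd_conj {D : Matrix n n ℂ} (hD : D.PosSemidef) (V : Matrix n n ℂ) :
    (V * D * star V).PosSemidef := by
  rw [Matrix.star_eq_conjTranspose]
  exact hD.mul_mul_conjTranspose_same V

lemma psd_diag (d : n → ℝ) (hd : ∀ i, 0 ≤ d i) :
    (diagonal (fun i => ((d i : ℝ) : ℂ))).PosSemidef :=
  Matrix.PosSemidef.diagonal (by
    intro i
    simp only [Pi.zero_apply]
    rw [Complex.zero_le_real]
    exact hd i)

/-- Jordan decomposition facts for a Hermitian matrix. -/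
lemma hermitian_decomp {A : Matrix n n ℂ} (hA : A.IsHermitian) :
    ∃ P N : Matrix n n ℂ, P.PosSemidef ∧ N.PosSemidef ∧ A = P - N ∧
      traceNorm A = P.trace.re + N.trace.re ∧
      traceNorm A = ∑ i, |hA.eigenvalues i| := by
  set V : Matrix n n ℂ := (hA.eigenvectorUnitary : Matrix n n ℂ) with hVdef
  have hVmem : V ∈ Matrix.unitaryGroup n ℂ := SetLike.coe_mem _
  have hVV : star V * V = 1 := Matrix.mem_unitaryGroup_iff'.mp hVmem
  set ev : n → ℝ := hA.eigenvalues with hev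
  set P : Matrix n n ℂ := V * diagonal (fun i => ((max (ev i) 0 : ℝ) : ℂ)) * star V with hP
  set N : Matrix n n ℂ := V * diagonal (fun i => ((max (-ev i) 0 : ℝ) : ℂ)) * star V with hN
  have hPpsd : P.PosSemidef := psd_conj (psd_diag _ fun i => le_max_right _ _) V
  have hNpsd : N.PosSemidef := psd_conj (psd_diag _ fun i => le_max_right _ _) V
  have hspec : A = V * diagonal (fun i => ((ev i : ℝ) : ℂ)) * star V := hA.spectral_theorem
  have hsub : A = P - N := by
    rw [hP, hN, ← Matrix.sub_mul, ← Matrix.mul_sub, Matrix.diagonal_sub]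
    have hd : (fun i => (((max (ev i) 0 : ℝ) : ℂ)) - ((max (-ev i) 0 : ℝ) : ℂ))
        = fun i => ((ev i : ℝ) : ℂ) := by
      funext i
      norm_cast
      exact max_zero_sub_max_neg_zero_eq_self _
    rw [hd, ← hspec]
  set S : Matrix n n ℂ := V * diagonal (fun i => ((|ev i| : ℝ) : ℂ)) * star V with hS
  have hSPN : S = P + N := by
    rw [hS, hP, hN, ← Matrix.add_mul, ← Matrix.mul_add, Matrix.diagonal_add]
    have hd : (fun i => (((max (ev i) 0 : ℝ) : ℂ)) + ((max (-ev i) 0 : ℝ) : ℂ))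
        = fun i => ((|ev i| : ℝ) : ℂ) := by
      funext i
      norm_cast
      exact max_zero_add_max_neg_zero_eq_abs_self _
    rw [hd]
  have hSpsd : S.PosSemidef := psd_conj (psd_diag _ fun i => abs_nonneg _) V
  have hSsq : S ^ 2 = Aᴴ * A := by
    rw [hA.eq, pow_two, hS, conj_mul_conj hVV, Matrix.diagonal_mul_diagonal]
    conv_rhs => rw [hspec]
    rw [conj_mul_conj hVV, Matrix.diagonal_mul_diagonal]
    have hd : (fun i => ((|ev i| : ℝ) : ℂ) * ((|ev i| : ℝ) : ℂ))
        = fun i => ((ev i : ℝ) : ℂ) * ((ev i : ℝ) : ℂ) := by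
      funext i
      norm_cast
      exact abs_mul_abs_self _
    rw [hd]
  have htrS : traceNorm A = S.trace.re := traceNorm_eq_of_sq hSpsd hSsq
  refine ⟨P, N, hPpsd, hNpsd, hsub, ?_, ?_⟩
  · rw [htrS, hSPN, Matrix.trace_add, Complex.add_re]
  · rw [htrS, hS, Matrix.trace_mul_cycle, hVV, one_mul, Matrix.trace_diagonal]
    rw [Complex.re_sum]
    simp


lemma sum_abs_diag_le_traceNorm {A : Matrix n n ℂ} (hA : A.IsHermitian)
    {W : Matrix n n ℂ} (hW : W ∈ Matrix.unitaryGroup n ℂ) :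
    ∑ i, |((star W * A * W) i i).re| ≤ traceNorm A := by
  obtain ⟨P, N, hP, hN, hsub, htr, -⟩ := hermitian_decomp hA
  have hPW : (star W * P * W).PosSemidef := by
    have := psd_conj hP (star W)
    rwa [star_star] at this
  have hNW : (star W * N * W).PosSemidef := by
    have := psd_conj hN (star W)
    rwa [star_star] at this
  have hkey : ∀ i, |((star W * A * W) i i).re|
      ≤ ((star W * P * W) i i).re + ((star W * N * W) i i).re := by
    intro i
    have h1 : star W * A * W = star W * P * W - star W * N * W := by
      rw [hsub, Matrix.mul_sub, Matrix.sub_mul]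
    have h2 : ((star W * A * W) i i).re
        = ((star W * P * W) i i).re - ((star W * N * W) i i).re := by
      rw [h1, Matrix.sub_apply, Complex.sub_re]
    rw [h2]
    have ha := psd_apply_re_nonneg hPW i
    have hb := psd_apply_re_nonneg hNW i
    rw [abs_sub_le_iff]
    constructor <;> linarith
  calc ∑ i, |((star W * A * W) i i).re|
      ≤ ∑ i, (((star W * P * W) i i).re + ((star W * N * W) i i).re) :=
        Finset.sum_le_sum fun i _ => hkey i
    _ = (star W * P * W).trace.re + (star W * N * W).trace.re := by
        rw [Finset.sum_add_distrib, Matrix.trace, Matrix.trace, Complex.re_sum,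
          Complex.re_sum]
        rfl
    _ = P.trace.re + N.trace.re := by rw [conj_trace P hW, conj_trace N hW]
    _ = traceNorm A := htr.symm

lemma traceNorm_add_le {A B : Matrix n n ℂ} (hA : A.IsHermitian) (hB : B.IsHermitian) :
    traceNorm (A + B) ≤ traceNorm A + traceNorm B := by
  have hC : (A + B).IsHermitian := hA.add hB
  set W : Matrix n n ℂ := (hC.eigenvectorUnitary : Matrix n n ℂ) with hWdef
  have hWmem : W ∈ Matrix.unitaryGroup n ℂ := SetLike.coe_mem _
  have hdiag : star W * (A + B) * W = diagonal (fun i => ((hC.eigenvalues i : ℝ) : ℂ)) :=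
    by
      have := hC.conjStarAlgAut_star_eigenvectorUnitary
      rw [Unitary.conjStarAlgAut_apply, Unitary.coe_star, star_star] at this
      exact this
  obtain ⟨-, -, -, -, -, -, heq⟩ :
      ∃ P N : Matrix n n ℂ, P.PosSemidef ∧ N.PosSemidef ∧ (A + B) = P - N ∧
      traceNorm (A + B) = P.trace.re + N.trace.re ∧
      traceNorm (A + B) = ∑ i, |hC.eigenvalues i| := hermitian_decomp hC
  rw [heq]
  have hsplit : ∀ i, |hC.eigenvalues i|
      ≤ |((star W * A * W) i i).re| + |((star W * B * W) i i).re| := by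
    intro i
    have h1 : ((star W * (A + B) * W) i i).re = hC.eigenvalues i := by
      rw [hdiag]
      simp
    have h2 : star W * (A + B) * W = star W * A * W + star W * B * W := by
      rw [Matrix.mul_add, Matrix.add_mul]
    have h3 : hC.eigenvalues i = ((star W * A * W) i i).re + ((star W * B * W) i i).re := by
      rw [← h1, h2, Matrix.add_apply, Complex.add_re]
    rw [h3]
    exact abs_add_le _ _
  calc ∑ i, |hC.eigenvalues i|
      ≤ ∑ i, (|((star W * A * W) i i).re| + |((star W * B * W) i i).re|) :=
        Finset.sum_le_sum fun i _ => hsplit i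
    _ = (∑ i, |((star W * A * W) i i).re|) + ∑ i, |((star W * B * W) i i).re| :=
        Finset.sum_add_distrib
    _ ≤ traceNorm A + traceNorm B :=
        add_le_add (sum_abs_diag_le_traceNorm hA hWmem) (sum_abs_diag_le_traceNorm hB hWmem)


lemma psd_smul {M : Matrix n n ℂ} (hM : M.PosSemidef) {c : ℝ} (hc : 0 ≤ c) :
    ((c : ℂ) • M).PosSemidef := by
  constructor
  · rw [Matrix.IsHermitian, Matrix.conjTranspose_smul, hM.1.eq]
    norm_num
  · intro x
    exact (hM.smul (a := (c : ℂ)) (by rw [Complex.zero_le_real]; exact hc)).2 x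

lemma psd_sum {ι : Type*} (s : Finset ι) (f : ι → Matrix n n ℂ)
    (h : ∀ i ∈ s, (f i).PosSemidef) : (∑ i ∈ s, f i).PosSemidef := by
  classical
  induction s using Finset.induction_on with
  | empty => simpa using Matrix.PosSemidef.zero
  | insert x s hx ih =>
    rw [Finset.sum_insert hx]
    exact Matrix.PosSemidef.add (h _ (Finset.mem_insert_self _ _))
      (ih fun i hi => h i (Finset.mem_insert_of_mem hi))

end TDAux

/-- if the measurement `{M_x}` detects `ρ` in the branch `x̂` with
probability at least `1 - ε`, and the post-measurement branch for `x̂` is `√ε`-close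
to `ρ`, then the total (outcome-ignoring) disturbance is at most `ε + √ε`. -/
theorem measurement_total_disturbance
    {d : ℕ} {X : Type} [Fintype X]
    (ρ : Matrix (Fin d) (Fin d) ℂ) (hρ : IsDensityMatrix ρ)
    (M : X → Matrix (Fin d) (Fin d) ℂ)
    (hM : ∑ x, (M x)ᴴ * M x = 1)
    (xhat : X) (ε : ℝ) (hε0 : 0 ≤ ε) (hε1 : ε < 1)
    (htr : 1 - ε ≤ (((M xhat)ᴴ * M xhat * ρ).trace).re)
    (hbranch : traceDist ρ
      ((((M xhat)ᴴ * M xhat * ρ).trace)⁻¹ • (M xhat * ρ * (M xhat)ᴴ)) ≤ Real.sqrt ε) :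
    traceDist ρ (∑ x, M x * ρ * (M x)ᴴ) ≤ ε + Real.sqrt ε := by
  classical
  open TDAux Matrix in
  set p : ℂ := ((M xhat)ᴴ * M xhat * ρ).trace with hpdef
  set t : ℝ := p.re with htdef
  set B : Matrix (Fin d) (Fin d) ℂ := M xhat * ρ * (M xhat)ᴴ with hBdef
  have hBpsd : B.PosSemidef := hρ.1.mul_mul_conjTranspose_same _
  have hpB : p = B.trace := by
    rw [hpdef, hBdef, ← Matrix.trace_mul_cycle]
  have hpreal : p = (t : ℂ) := by rw [hpB, htdef, hpB]; exact psd_trace_eq_re hBpsd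
  have ht0 : 0 < t := lt_of_lt_of_le (by linarith) htr
  set σ : Matrix (Fin d) (Fin d) ℂ := ∑ x, M x * ρ * (M x)ᴴ with hσdef
  have hσpsd : σ.PosSemidef :=
    psd_sum _ _ fun x _ => hρ.1.mul_mul_conjTranspose_same _
  have htrσ : σ.trace = 1 := by
    rw [hσdef, Matrix.trace_sum]
    have : ∀ x : X, (M x * ρ * (M x)ᴴ).trace = ((M x)ᴴ * M x * ρ).trace := fun x =>
      Matrix.trace_mul_cycle _ _ _
    simp_rw [this, ← Matrix.trace_sum, ← Finset.sum_mul, hM, one_mul, hρ.2]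
  have hRpsd : (σ - B).PosSemidef := by
    have hsum : σ - B = ∑ x ∈ Finset.univ.erase xhat, M x * ρ * (M x)ᴴ := by
      rw [hσdef, hBdef,
        ← Finset.add_sum_erase Finset.univ (fun x => M x * ρ * (M x)ᴴ) (Finset.mem_univ xhat)]
      abel
    rw [hsum]
    exact psd_sum _ _ fun x _ => hρ.1.mul_mul_conjTranspose_same _
  have htrR : (σ - B).trace.re = 1 - t := by
    rw [Matrix.trace_sub, htrσ, ← hpB, Complex.sub_re, Complex.one_re]
  have ht1 : t ≤ 1 := by
    have := psd_trace_re_nonneg hRpsd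
    rw [htrR] at this; linarith
  set σh : Matrix (Fin d) (Fin d) ℂ := p⁻¹ • B with hσhdef
  have hinv : p⁻¹ = ((t⁻¹ : ℝ) : ℂ) := by rw [hpreal, Complex.ofReal_inv]
  have hσhpsd : σh.PosSemidef := by
    rw [hσhdef, hinv]
    exact psd_smul hBpsd (le_of_lt (inv_pos.mpr ht0))
  -- trace norm of σh - σ
  have hsplit : σh - σ = ((p⁻¹ - 1) • B) + (B - σ) := by
    rw [hσhdef, sub_smul, one_smul]
    abel
  have hc0 : (0:ℝ) ≤ t⁻¹ - 1 := by
    have h1 : 1 ≤ t⁻¹ := (one_le_inv_iff₀.mpr ⟨ht0, ht1⟩)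
    linarith
  have hsmulpsd : ((p⁻¹ - 1) • B).PosSemidef := by
    have : p⁻¹ - 1 = ((t⁻¹ - 1 : ℝ) : ℂ) := by rw [hinv]; push_cast; ring
    rw [this]
    exact psd_smul hBpsd hc0
  have hnorm1 : traceNorm ((p⁻¹ - 1) • B) = 1 - t := by
    have hc : (p⁻¹ - 1) * B.trace = (((t⁻¹ - 1) * t : ℝ) : ℂ) := by
      rw [← hpB, hpreal]; push_cast; ring
    rw [traceNorm_psd hsmulpsd, Matrix.trace_smul, smul_eq_mul, hc, Complex.ofReal_re]
    field_simp
  have hnorm2 : traceNorm (B - σ) = 1 - t := by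
    rw [← traceNorm_neg, neg_sub, traceNorm_psd hRpsd, htrR]
  have htri2 : traceNorm (σh - σ) ≤ 2 * (1 - t) := by
    rw [hsplit]
    calc traceNorm ((p⁻¹ - 1) • B + (B - σ))
        ≤ traceNorm ((p⁻¹ - 1) • B) + traceNorm (B - σ) :=
          traceNorm_add_le hsmulpsd.1 (hBpsd.1.sub hσpsd.1)
      _ = 2 * (1 - t) := by rw [hnorm1, hnorm2]; ring
  have htri1 : traceNorm (ρ - σ) ≤ traceNorm (ρ - σh) + traceNorm (σh - σ) := by
    have : ρ - σ = (ρ - σh) + (σh - σ) := by abel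
    rw [this]
    exact traceNorm_add_le (hρ.1.1.sub hσhpsd.1) (hσhpsd.1.sub hσpsd.1)
  have hb : traceNorm (ρ - σh) ≤ 2 * Real.sqrt ε := by
    rw [traceDist] at hbranch
    linarith
  rw [traceDist]
  have h1t : 1 - t ≤ ε := by linarith
  calc traceNorm (ρ - σ) / 2
      ≤ (traceNorm (ρ - σh) + traceNorm (σh - σ)) / 2 := by linarith
    _ ≤ (2 * Real.sqrt ε + 2 * (1 - t)) / 2 := by linarith
    _ = Real.sqrt ε + (1 - t) := by ring
    _ ≤ ε + Real.sqrt ε := by linarith
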